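/- Let D ⊆ ℝ^d be compact convex and f : D → ℝ continuous and concave. Then the supremum over all finite ensembles {(x_i, p_i)} with x_i ∈ D, p_i ≥ 0, ∑ p_i = 1 of f(∑ p_i x_i) − ∑ p_i f(x_i) is attained by an ensemble with at most d+1 points. -/

import Mathlib

open BigOperators

lemma holevo_pad {α : Type} {ι : Type} [Fintype ι] {N : ℕ}
    (hcard : Fintype.card ι ≤ N) (w : ι → ℝ) (x : ι → α) (x₀ : α) :
    ∃ (q : Fin N → ℝ) (ys : Fin N → α),
      (∀ j, q j = 0 ∨ ∃ i, q j = w i) ∧ (∀ j, ys j = x₀ ∨ ∃ i, ys j = x i) ∧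
      (∀ (V : Type) [AddCommMonoid V] [Module ℝ V] (φ : α → V),
        ∑ j, q j • φ (ys j) = ∑ i, w i • φ (x i)) := by
  classical
  obtain ⟨e⟩ : Nonempty (ι ↪ Fin N) := by
    refine Function.Embedding.nonempty_of_card_le ?_
    simpa using hcard
  refine ⟨fun j => if h : ∃ i, e i = j then w h.choose else 0,
    fun j => if h : ∃ i, e i = j then x h.choose else x₀, ?_, ?_, ?_⟩
  · intro j
    by_cases h : ∃ i, e i = j
    · exact Or.inr ⟨h.choose, by simp [h]⟩
    · exact Or.inl (by simp [h])
  · intro j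
    by_cases h : ∃ i, e i = j
    · exact Or.inr ⟨h.choose, by simp [h]⟩
    · exact Or.inl (by simp [h])
  · intro V _ _ φ
    have key : ∀ i : ι,
        (if h : ∃ i', e i' = e i then w h.choose else 0) = w i ∧
        (if h : ∃ i', e i' = e i then x h.choose else x₀) = x i := by
      intro i
      have h : ∃ i', e i' = e i := ⟨i, rfl⟩
      have hc : h.choose = i := e.injective h.choose_spec
      simp [dif_pos h, hc]
    rw [← Finset.sum_subset (Finset.subset_univ (Finset.univ.map e))]
    · rw [Finset.sum_map]
      refine Finset.sum_congr rfl fun i _ => ?_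
      simp only [Function.Embedding.coeFn_mk]
      rw [(key i).1, (key i).2]
    · intro j _ hj
      have h : ¬ ∃ i, e i = j := by
        simpa [Finset.mem_map] using hj
      simp [h]

/-- For compact convex `D ⊆ ℝ^d` and continuous concave `f : D → ℝ`, the supremum over all
finite ensembles of `f(∑ pᵢ xᵢ) - ∑ pᵢ f(xᵢ)` is attained by an ensemble with at most `d+1`
points. -/
theorem holevo_sup_attained_with_d_plus_one_points {d : ℕ} (D : Set (Fin d → ℝ))
    (hDconv : Convex ℝ D) (hDcomp : IsCompact D) (hDne : D.Nonempty)
    (f : (Fin d → ℝ) → ℝ) (hf : ConcaveOn ℝ D f) (hfcont : ContinuousOn f D) :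
    ∃ (p : Fin (d + 1) → ℝ) (xs : Fin (d + 1) → (Fin d → ℝ)),
      (∀ i, 0 ≤ p i) ∧ (∑ i, p i = 1) ∧ (∀ i, xs i ∈ D) ∧
      ∀ (n : ℕ) (q : Fin n → ℝ) (ys : Fin n → (Fin d → ℝ)),
        (∀ i, 0 ≤ q i) → (∑ i, q i = 1) → (∀ i, ys i ∈ D) →
        f (∑ i, q i • ys i) - ∑ i, q i * f (ys i) ≤
          f (∑ i, p i • xs i) - ∑ i, p i * f (xs i) := by
  classical
  obtain ⟨x₀, hx₀⟩ := hDne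
  set S : Set ((Fin d → ℝ) × ℝ) := (fun x => ((x, f x) : (Fin d → ℝ) × ℝ)) '' D with hS
  have hfrank : Module.finrank ℝ ((Fin d → ℝ) × ℝ) = d + 1 := by
    simp [Module.finrank_prod, Module.finrank_pi]
  -- membership of ensemble points in the convex hull of the graph
  have memK : ∀ (ι : Type) (_ : Fintype ι) (q : ι → ℝ) (ys : ι → (Fin d → ℝ)),
      (∀ i, 0 ≤ q i) → (∑ i, q i = 1) → (∀ i, ys i ∈ D) →
      ((∑ i, q i • ys i, ∑ i, q i * f (ys i)) : (Fin d → ℝ) × ℝ) ∈ convexHull ℝ S := by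
    intro ι _ q ys hq hq1 hys
    have : ((∑ i, q i • ys i, ∑ i, q i * f (ys i)) : (Fin d → ℝ) × ℝ)
        = ∑ i, q i • ((ys i, f (ys i)) : (Fin d → ℝ) × ℝ) := by
      apply Prod.ext <;> simp [Prod.fst_sum, Prod.snd_sum, smul_eq_mul]
    rw [this]
    exact (convex_convexHull ℝ S).sum_mem (fun i _ => hq i) hq1
      (fun i _ => subset_convexHull ℝ S ⟨ys i, hys i, rfl⟩)
  -- Carathéodory extraction
  have cara : ∀ z ∈ convexHull ℝ S, ∃ (ι : Type) (_ : Fintype ι) (ww : ι → ℝ)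
      (xx : ι → (Fin d → ℝ)),
      Fintype.card ι ≤ d + 2 ∧
      AffineIndependent ℝ (fun i => ((xx i, f (xx i)) : (Fin d → ℝ) × ℝ)) ∧
      (∀ i, 0 < ww i) ∧ (∑ i, ww i = 1) ∧ (∀ i, xx i ∈ D) ∧
      (∑ i, ww i • xx i = z.1) ∧ (∑ i, ww i * f (xx i) = z.2) := by
    intro z hz
    obtain ⟨ι, hfin, zz, ww, hrange, hindep, hpos, hsum1, hcomb⟩ :=
      eq_pos_convex_span_of_mem_convexHull hz
    refine ⟨ι, hfin, ww, fun i => (zz i).1, ?_, ?_, hpos, hsum1, ?_, ?_, ?_⟩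
    · have := hindep.card_le_finrank_succ
      have h2 : Module.finrank ℝ (vectorSpan ℝ (Set.range zz)) ≤ d + 1 := by
        rw [← hfrank]
        exact Submodule.finrank_le _
      omega
    · have hzz : ∀ i, ((zz i).1, f ((zz i).1)) = zz i := by
        intro i
        obtain ⟨y, hy, hxy⟩ := hrange (Set.mem_range_self i)
        rw [← hxy]
      have : (fun i => (((zz i).1, f ((zz i).1)) : (Fin d → ℝ) × ℝ)) = zz :=
        funext hzz
      rw [this]
      exact hindep
    · intro i
      obtain ⟨y, hy, hxy⟩ := hrange (Set.mem_range_self i)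
      show (zz i).1 ∈ D
      have : (zz i).1 = y := by rw [← hxy]
      rw [this]; exact hy
    · rw [← hcomb, Prod.fst_sum]
      exact Finset.sum_congr rfl fun i _ => by rw [Prod.smul_fst]
    · have hzz : ∀ i, f ((zz i).1) = (zz i).2 := by
        intro i
        obtain ⟨y, hy, hxy⟩ := hrange (Set.mem_range_self i)
        rw [← hxy]
      rw [← hcomb, Prod.snd_sum]
      exact Finset.sum_congr rfl fun i _ => by
        rw [Prod.smul_snd, smul_eq_mul, hzz i]
  -- maximize over (d+2)-point ensembles
  set Sig : Set ((Fin (d + 2) → ℝ) × (Fin (d + 2) → (Fin d → ℝ))) :=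
    stdSimplex ℝ (Fin (d + 2)) ×ˢ Set.univ.pi (fun _ => D) with hSig
  set Φ : (Fin (d + 2) → ℝ) × (Fin (d + 2) → (Fin d → ℝ)) → ℝ :=
    fun wv => f (∑ i, wv.1 i • wv.2 i) - ∑ i, wv.1 i * f (wv.2 i) with hΦ
  have hcomp : IsCompact Sig :=
    (isCompact_stdSimplex ℝ _).prod (isCompact_univ_pi fun _ => hDcomp)
  have hne : Sig.Nonempty := by
    refine ⟨(fun i => if i = 0 then 1 else 0, fun _ => x₀), ⟨⟨?_, ?_⟩, ?_⟩⟩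
    · intro i; dsimp only; split <;> norm_num
    · simp
    · intro i _; exact hx₀
  have hmapsTo : ∀ wv ∈ Sig, ∑ i, wv.1 i • wv.2 i ∈ D := by
    rintro ⟨w, v⟩ ⟨hw, hv⟩
    exact hDconv.sum_mem (fun i _ => hw.1 i) hw.2 (fun i _ => hv i (Set.mem_univ i))
  have hΦcont : ContinuousOn Φ Sig := by
    have hc1 : Continuous fun wv : (Fin (d + 2) → ℝ) × (Fin (d + 2) → (Fin d → ℝ)) =>
        ∑ i, wv.1 i • wv.2 i :=
      continuous_finset_sum _ fun i _ =>
        ((continuous_apply i).comp continuous_fst).smul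
          ((continuous_apply i).comp continuous_snd)
    refine ContinuousOn.sub (hfcont.comp hc1.continuousOn hmapsTo) ?_
    refine continuousOn_finset_sum _ fun i _ => ?_
    refine ContinuousOn.mul ((continuous_apply i).comp continuous_fst).continuousOn ?_
    refine hfcont.comp ((continuous_apply i).comp continuous_snd).continuousOn ?_
    rintro ⟨w, v⟩ ⟨_, hv⟩
    exact hv i (Set.mem_univ i)
  obtain ⟨mwv, hmem, hmax⟩ := hcomp.exists_isMaxOn hne hΦcont
  set M : ℝ := Φ mwv with hM
  -- every ensemble value is at most M
  have stepA : ∀ (ι : Type) (_ : Fintype ι) (q : ι → ℝ) (ys : ι → (Fin d → ℝ)),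
      (∀ i, 0 ≤ q i) → (∑ i, q i = 1) → (∀ i, ys i ∈ D) →
      f (∑ i, q i • ys i) - ∑ i, q i * f (ys i) ≤ M := by
    intro ι hfin q ys hq hq1 hys
    have hz := memK ι hfin q ys hq hq1 hys
    obtain ⟨ι', hfin', ww, xx, hcard, _, hpos, hsum1, hmemD, h1, h2⟩ := cara _ hz
    obtain ⟨q₂, ys₂, hq₂, hys₂, hsum⟩ := holevo_pad hcard ww xx x₀
    have hq₂sum : ∑ j, q₂ j = 1 := by
      have := hsum ℝ (fun _ => (1 : ℝ))
      simpa [smul_eq_mul] using this.trans (by simpa [smul_eq_mul] using hsum1)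
    have hq₂nonneg : ∀ j, 0 ≤ q₂ j := by
      intro j
      rcases hq₂ j with h | ⟨i, h⟩
      · rw [h]
      · rw [h]; exact (hpos i).le
    have hys₂D : ∀ j, ys₂ j ∈ D := by
      intro j
      rcases hys₂ j with h | ⟨i, h⟩
      · rw [h]; exact hx₀
      · rw [h]; exact hmemD i
    have hb : ∑ j, q₂ j • ys₂ j = ∑ i, q i • ys i := by
      have := hsum (Fin d → ℝ) id
      simpa using this.trans h1
    have hv : ∑ j, q₂ j * f (ys₂ j) = ∑ i, q i * f (ys i) := by
      have := hsum ℝ f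
      simp only [smul_eq_mul] at this
      exact this.trans h2
    have hmemSig : (q₂, ys₂) ∈ Sig := ⟨⟨hq₂nonneg, hq₂sum⟩, fun i _ => hys₂D i⟩
    have := hmax hmemSig
    simp only [hΦ, Set.mem_setOf_eq] at this ⊢
    rw [← hb, ← hv]
    exact this
  -- extract the maximizing point in the convex hull
  have hmwv : (∑ i, mwv.1 i • mwv.2 i, ∑ i, mwv.1 i * f (mwv.2 i)) ∈ convexHull ℝ S := by
    obtain ⟨hw, hv⟩ := hmem
    exact memK _ _ _ _ hw.1 hw.2 (fun i => hv i (Set.mem_univ i))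
  have hMval : M = f (∑ i, mwv.1 i • mwv.2 i) - ∑ i, mwv.1 i * f (mwv.2 i) := rfl
  obtain ⟨ι, hfin, ww, xx, hcard, hindep, hpos, hsum1, hmemD, h1, h2⟩ := cara _ hmwv
  simp only at h1 h2
  by_cases hcard' : Fintype.card ι ≤ d + 1
  · -- pad to d+1 points
    obtain ⟨p, xs, hp, hxs, hsum⟩ := holevo_pad hcard' ww xx x₀
    have hpsum : ∑ j, p j = 1 := by
      have := hsum ℝ (fun _ => (1 : ℝ))
      simpa [smul_eq_mul] using this.trans (by simpa [smul_eq_mul] using hsum1)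
    have hpnonneg : ∀ j, 0 ≤ p j := by
      intro j
      rcases hp j with h | ⟨i, h⟩
      · rw [h]
      · rw [h]; exact (hpos i).le
    have hxsD : ∀ j, xs j ∈ D := by
      intro j
      rcases hxs j with h | ⟨i, h⟩
      · rw [h]; exact hx₀
      · rw [h]; exact hmemD i
    have hb : ∑ j, p j • xs j = ∑ i, mwv.1 i • mwv.2 i := by
      have := hsum (Fin d → ℝ) id
      simpa using this.trans h1
    have hv : ∑ j, p j * f (xs j) = ∑ i, mwv.1 i * f (mwv.2 i) := by
      have := hsum ℝ f
      simp only [smul_eq_mul] at this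
      exact this.trans h2
    refine ⟨p, xs, hpnonneg, hpsum, hxsD, ?_⟩
    intro n q ys hq hq1 hys
    rw [hb, hv, ← hMval]
    exact stepA (Fin n) inferInstance q ys hq hq1 hys
  · -- d+2 affinely independent points with positive weights: contradiction
    exfalso
    have hcard2 : Fintype.card ι = d + 2 := by omega
    set g : ι → (Fin d → ℝ) × ℝ := fun i => (xx i, f (xx i)) with hg
    have htot : affineSpan ℝ (Set.range g) = ⊤ := by
      rw [hindep.affineSpan_eq_top_iff_card_eq_finrank_add_one, hfrank, hcard2]
    set b : AffineBasis ι ℝ ((Fin d → ℝ) × ℝ) := ⟨g, hindep, htot⟩ with hb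
    set z : (Fin d → ℝ) × ℝ := (∑ i, mwv.1 i • mwv.2 i, ∑ i, mwv.1 i * f (mwv.2 i)) with hz
    have hzcomb : ∑ i, ww i • g i = z := by
      rw [Prod.ext_iff]
      constructor
      · rw [Prod.fst_sum]
        simpa using h1
      · rw [Prod.snd_sum]
        simp only [hg, Prod.smul_snd, smul_eq_mul]
        exact h2
    have hcoord : ∀ i, b.coord i z = ww i := by
      intro i
      rw [← hzcomb, ← Finset.affineCombination_eq_linear_combination Finset.univ g ww hsum1]
      exact b.coord_apply_combination_of_mem (Finset.mem_univ i) hsum1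
    have hint : z ∈ interior (convexHull ℝ (Set.range g)) := by
      have : Set.range ⇑b = Set.range g := rfl
      rw [← this, b.interior_convexHull]
      intro i
      rw [hcoord i]
      exact hpos i
    rw [mem_interior_iff_mem_nhds, Metric.mem_nhds_iff] at hint
    obtain ⟨ε, hε, hball⟩ := hint
    set z₂ : (Fin d → ℝ) × ℝ := (z.1, z.2 - ε / 2) with hz₂
    have hz₂mem : z₂ ∈ convexHull ℝ S := by
      have hsub : Set.range g ⊆ S := by
        rintro _ ⟨i, rfl⟩
        exact ⟨xx i, hmemD i, rfl⟩
      refine convexHull_mono hsub ?_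
      refine hball ?_
      have hd : dist z₂ z = ε / 2 := by
        rw [Prod.dist_eq]
        have h1 : dist z₂.1 z.1 = 0 := by rw [hz₂]; simp
        have h2 : dist z₂.2 z.2 = ε / 2 := by
          rw [hz₂]
          simp only [Real.dist_eq]
          rw [show z.2 - ε / 2 - z.2 = -(ε / 2) by ring, abs_neg,
            abs_of_nonneg (by linarith : (0:ℝ) ≤ ε / 2)]
        rw [h1, h2]
        exact max_eq_right (by linarith)
      rw [Metric.mem_ball, hd]
      linarith
    obtain ⟨ι₂, hfin₂, ww₂, xx₂, hcard₂, _, hpos₂, hsum₂, hmemD₂, H1, H2⟩ := cara _ hz₂mem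
    obtain ⟨q₃, ys₃, hq₃, hys₃, hsum₃⟩ := holevo_pad hcard₂ ww₂ xx₂ x₀
    have hq₃sum : ∑ j, q₃ j = 1 := by
      have := hsum₃ ℝ (fun _ => (1 : ℝ))
      simpa [smul_eq_mul] using this.trans (by simpa [smul_eq_mul] using hsum₂)
    have hq₃nonneg : ∀ j, 0 ≤ q₃ j := by
      intro j
      rcases hq₃ j with h | ⟨i, h⟩
      · rw [h]
      · rw [h]; exact (hpos₂ i).le
    have hys₃D : ∀ j, ys₃ j ∈ D := by
      intro j
      rcases hys₃ j with h | ⟨i, h⟩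
      · rw [h]; exact hx₀
      · rw [h]; exact hmemD₂ i
    have hb3 : ∑ j, q₃ j • ys₃ j = z.1 := by
      have := hsum₃ (Fin d → ℝ) id
      simpa using this.trans H1
    have hv3 : ∑ j, q₃ j * f (ys₃ j) = z.2 - ε / 2 := by
      have := hsum₃ ℝ f
      simp only [smul_eq_mul] at this
      exact this.trans H2
    have := stepA (Fin (d + 2)) inferInstance q₃ ys₃ hq₃nonneg hq₃sum hys₃D
    rw [hb3, hv3, hMval] at this
    simp only [hz] at this
    linarith
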